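/- Let G be a graph with n vertices and let w be a vertex of degree d in G. Then for all m ∈ ℕ, P_DP(G,m) ≤ m(1 - 1/m)^d · P_DP(G − w, m). -/

import Mathlib

open SimpleGraph

/-- The number of proper `m`-colorings of a graph `G`. -/
noncomputable def numColorings {V : Type} (G : SimpleGraph V) (m : ℕ) : ℕ :=
  Nat.card {c : V → Fin m // ∀ ⦃a b : V⦄, G.Adj a b → c a ≠ c b}

/-- An `m`-fold cover `(L, H)` of a graph `G`. -/
structure DPCover {V : Type} (G : SimpleGraph V) (m : ℕ) where
  X : Type
  H : SimpleGraph X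
  L : V → Set X
  partition : ∀ x : X, ∃! v : V, x ∈ L v
  fold : ∀ v : V, Nat.card (L v) = m
  cliques : ∀ v : V, ∀ x ∈ L v, ∀ y ∈ L v, x ≠ y → H.Adj x y
  cross : ∀ u v : V, ∀ x ∈ L u, ∀ y ∈ L v, H.Adj x y → u = v ∨ G.Adj u v
  matching : ∀ u v : V, G.Adj u v → ∀ x ∈ L u, ∀ y ∈ L v, ∀ z ∈ L v,
      H.Adj x y → H.Adj x z → y = z
  matching' : ∀ u v : V, G.Adj u v → ∀ y ∈ L u, ∀ z ∈ L u, ∀ x ∈ L v,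
      H.Adj y x → H.Adj z x → y = z

/-- A cover is full if for each edge `uv` of `G` the matching between `L u` and `L v`
is a perfect matching. -/
def DPCover.IsFull {V : Type} {G : SimpleGraph V} {m : ℕ} (C : DPCover G m) : Prop :=
  ∀ u v : V, G.Adj u v → ∀ x ∈ C.L u, ∃ y ∈ C.L v, C.H.Adj x y

/-- An `H`-coloring of `G`, viewed as an independent transversal of the lists. -/
def DPCover.IsColoring {V : Type} {G : SimpleGraph V} {m : ℕ} (C : DPCover G m)
    (f : V → C.X) : Prop :=
  (∀ v : V, f v ∈ C.L v) ∧ ∀ u v : V, u ≠ v → ¬ C.H.Adj (f u) (f v)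

/-- `P_DP(G, 𝓗)`, the number of `𝓗`-colorings of `G`. -/
noncomputable def DPCover.count {V : Type} {G : SimpleGraph V} {m : ℕ}
    (C : DPCover G m) : ℕ :=
  Nat.card {f : V → C.X // C.IsColoring f}

/-- The DP color function `P_DP(G, m)`. -/
noncomputable def PDP {V : Type} (G : SimpleGraph V) (m : ℕ) : ℕ :=
  sInf {n : ℕ | ∃ C : DPCover G m, C.count = n}

/-- The DP-chromatic number `χ_DP(G)`. -/
noncomputable def chiDP {V : Type} (G : SimpleGraph V) : ℕ :=
  sInf {m : ℕ | ∀ C : DPCover G m, ∃ f : V → C.X, C.IsColoring f}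

/-- A canonical labeling of an `m`-fold cover. -/
def DPCover.HasCanonicalLabeling {V : Type} {G : SimpleGraph V} {m : ℕ}
    (C : DPCover G m) : Prop :=
  ∃ φ : V × Fin m → C.X, Function.Bijective φ ∧ (∀ v j, φ (v, j) ∈ C.L v) ∧
    ∀ u v : V, G.Adj u v → ∀ j : Fin m, C.H.Adj (φ (u, j)) (φ (v, j))

/-- A graph is 2-connected if it has at least 3 vertices, is connected, and
remains connected after deleting any single vertex. -/
def TwoConnected {V : Type} (G : SimpleGraph V) : Prop :=
  3 ≤ Nat.card V ∧ G.Connected ∧ ∀ v : V, (G.induce ({v}ᶜ : Set V)).Connected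

section Aux
variable {V : Type} [Fintype V] [DecidableEq V]

/-- The trivial cover with no cross edges. -/
def trivCover (G : SimpleGraph V) (m : ℕ) : DPCover G m where
  X := V × Fin m
  H := { Adj := fun p q => p.1 = q.1 ∧ p ≠ q
         symm := ⟨fun p q h => ⟨h.1.symm, h.2.symm⟩⟩
         loopless := ⟨fun p hp => hp.2 rfl⟩ }
  L := fun v => {p | p.1 = v}
  partition := fun p => ⟨p.1, rfl, fun v hv => hv.symm⟩
  fold := fun v => by
    have : {p : V × Fin m // p.1 = v} ≃ Fin m :=
      { toFun := fun p => p.1.2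
        invFun := fun j => ⟨(v, j), rfl⟩
        left_inv := fun p => by
          obtain ⟨⟨a, b⟩, h⟩ := p
          cases h; rfl
        right_inv := fun j => rfl }
    exact (Nat.card_congr this).trans (Nat.card_fin m)
  cliques := fun v x hx y hy hne => ⟨hx.trans hy.symm, hne⟩
  cross := fun u v x hx y hy h => Or.inl ((hx.symm.trans h.1).trans hy)
  matching := fun u v huv x hx y hy z hz h1 h2 => by
    exact absurd ((hx.symm.trans h1.1).trans hy) (G.ne_of_adj huv)
  matching' := fun u v huv y hy z hz x hx h1 h2 => by
    exact absurd ((hy.symm.trans h1.1).trans hx) (G.ne_of_adj huv)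

theorem PDP_exists (G : SimpleGraph V) (m : ℕ) :
    ∃ C : DPCover G m, C.count = PDP G m := by
  have h : {n : ℕ | ∃ C : DPCover G m, C.count = n}.Nonempty := ⟨_, trivCover G m, rfl⟩
  exact Nat.sInf_mem h

omit [Fintype V] [DecidableEq V] in
theorem PDP_le (G : SimpleGraph V) (m : ℕ) (C : DPCover G m) : PDP G m ≤ C.count :=
  Nat.sInf_le ⟨C, rfl⟩

end Aux
open Finset

theorem card_perm_fix (m : ℕ) (j c : Fin m) :
    Fintype.card {π : Equiv.Perm (Fin m) // π j = c} = Nat.factorial (m-1) := by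
  classical
  have key : ∀ c c' : Fin m,
      Fintype.card {π : Equiv.Perm (Fin m) // π j = c}
        = Fintype.card {π : Equiv.Perm (Fin m) // π j = c'} := by
    intro c c'
    refine Fintype.card_congr
      { toFun := fun π => ⟨π.1.trans (Equiv.swap c c'), by simp [π.2]⟩
        invFun := fun π => ⟨π.1.trans (Equiv.swap c c'), by simp [π.2]⟩
        left_inv := fun π => by
          ext x
          simp [Equiv.swap_apply_self]
        right_inv := fun π => by
          ext x
          simp [Equiv.swap_apply_self] }
  have hsum : ∑ c' : Fin m, Fintype.card {π : Equiv.Perm (Fin m) // π j = c'}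
      = Fintype.card (Equiv.Perm (Fin m)) := by
    rw [← Fintype.card_sigma]
    exact Fintype.card_congr (Equiv.sigmaFiberEquiv (fun π : Equiv.Perm (Fin m) => π j))
  have hconst : ∑ c' : Fin m, Fintype.card {π : Equiv.Perm (Fin m) // π j = c'}
      = m * Fintype.card {π : Equiv.Perm (Fin m) // π j = c} := by
    rw [Finset.sum_congr rfl (fun c' _ => key c' c)]
    simp [Finset.sum_const, mul_comm]
  have hm : 0 < m := j.pos
  have hfact : Nat.factorial m = m * Nat.factorial (m-1) := by
    obtain ⟨k, rfl⟩ := Nat.exists_eq_succ_of_ne_zero hm.ne'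
    simp [Nat.factorial_succ]
  have : m * Fintype.card {π : Equiv.Perm (Fin m) // π j = c} = m * Nat.factorial (m-1) := by
    rw [← hconst, hsum, Fintype.card_perm, Fintype.card_fin, hfact]
  exact Nat.eq_of_mul_eq_mul_left hm this

theorem card_perm_ne (m : ℕ) (j c : Fin m) :
    Fintype.card {π : Equiv.Perm (Fin m) // π j ≠ c} = Nat.factorial m - Nat.factorial (m-1) := by
  classical
  have := Fintype.card_subtype_compl (fun π : Equiv.Perm (Fin m) => π j = c)
  rw [this, card_perm_fix, Fintype.card_perm, Fintype.card_fin]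

section Ext
variable {V : Type} [Fintype V] [DecidableEq V] (G : SimpleGraph V) [DecidableRel G.Adj]
  (w : V) {m : ℕ}

/-- The vertex `u`, a neighbor of `w`, as an element of `{w}ᶜ`. -/
def nb (u : V) (hu : G.Adj w u) : ({w}ᶜ : Set V) :=
  ⟨u, by simp [(G.ne_of_adj hu).symm]⟩

variable (C' : DPCover (G.induce ({w}ᶜ : Set V)) m)

omit [Fintype V] [DecidableEq V] [DecidableRel G.Adj] in
theorem list_eq {a : C'.X} {v1 v2 : ({w}ᶜ : Set V)}
    (h1 : a ∈ C'.L v1) (h2 : a ∈ C'.L v2) : v1 = v2 := by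
  obtain ⟨v, hv, hu⟩ := C'.partition a
  exact (hu v1 h1).trans (hu v2 h2).symm

variable (e : ∀ v : ({w}ᶜ : Set V), Fin m ≃ C'.L v) (σ : V → Equiv.Perm (Fin m))

/-- Adjacency of the extended cover. -/
def extAdj : C'.X ⊕ Fin m → C'.X ⊕ Fin m → Prop
  | .inl x, .inl y => C'.H.Adj x y
  | .inr i, .inr j => i ≠ j
  | .inl x, .inr j => ∃ u, ∃ hu : G.Adj w u, x = (e (nb G w u hu) ((σ u) j) : C'.X)
  | .inr j, .inl x => ∃ u, ∃ hu : G.Adj w u, x = (e (nb G w u hu) ((σ u) j) : C'.X)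

/-- Lists of the extended cover. -/
def extL (v : V) : Set (C'.X ⊕ Fin m) :=
  if h : v = w then Set.range Sum.inr
  else Sum.inl '' (C'.L ⟨v, by simp [h]⟩)

omit [Fintype V] [DecidableRel G.Adj] in
theorem extL_self : extL G w C' w = Set.range Sum.inr := dif_pos rfl

omit [Fintype V] [DecidableRel G.Adj] in
theorem extL_of_ne {v : V} (h : v ≠ w) :
    extL G w C' v = Sum.inl '' (C'.L ⟨v, by simp [h]⟩) := dif_neg h

omit [Fintype V] [DecidableEq V] [DecidableRel G.Adj] in
theorem extAdj_inr_inl_iff {j : Fin m} {v : ({w}ᶜ : Set V)} {b : C'.X} (hb : b ∈ C'.L v) :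
    extAdj G w C' e σ (Sum.inr j) (Sum.inl b) ↔
      ∃ hu : G.Adj w v.1, b = (e v ((σ v.1) j) : C'.X) := by
  constructor
  · rintro ⟨u1, hu1, rfl⟩
    have h1 : ((e (nb G w u1 hu1) ((σ u1) j)) : C'.X) ∈ C'.L (nb G w u1 hu1) :=
      (e (nb G w u1 hu1) ((σ u1) j)).2
    have hv : nb G w u1 hu1 = v := list_eq G w C' h1 hb
    subst hv
    exact ⟨hu1, rfl⟩
  · rintro ⟨hu, rfl⟩
    refine ⟨v.1, hu, ?_⟩
    have h : nb G w v.1 hu = v := Subtype.ext rfl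
    rw [h]

omit [Fintype V] [DecidableEq V] [DecidableRel G.Adj] in
theorem extAdj_symm : Symmetric (extAdj G w C' e σ) := by
  rintro (x | i) (y | j) h
  · exact C'.H.adj_symm h
  · exact h
  · exact h
  · exact Ne.symm h

omit [Fintype V] in
theorem ext_matching : ∀ u v : V, G.Adj u v → ∀ x ∈ extL G w C' u, ∀ y ∈ extL G w C' v,
    ∀ z ∈ extL G w C' v, extAdj G w C' e σ x y → extAdj G w C' e σ x z → y = z := by
  intro u v huv x hx y hy z hz h1 h2
  by_cases hu : u = w <;> by_cases hv : v = w
  · rw [hu, hv] at huv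
    exact absurd huv G.irrefl
  · -- u = w, v ≠ w
    rw [hu, extL_self] at hx
    rw [extL_of_ne G w C' hv] at hy hz
    obtain ⟨j, rfl⟩ := hx
    obtain ⟨a, ha, rfl⟩ := hy
    obtain ⟨b, hb, rfl⟩ := hz
    obtain ⟨hu1, ha1⟩ := (extAdj_inr_inl_iff G w C' e σ ha).mp h1
    obtain ⟨hu2, hb1⟩ := (extAdj_inr_inl_iff G w C' e σ hb).mp h2
    rw [ha1, hb1]
  · -- v = w, u ≠ w
    rw [hv, extL_self] at hy hz
    rw [extL_of_ne G w C' hu] at hx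
    obtain ⟨a, ha, rfl⟩ := hx
    obtain ⟨j, rfl⟩ := hy
    obtain ⟨j', rfl⟩ := hz
    obtain ⟨hu1, ha1⟩ := (extAdj_inr_inl_iff G w C' e σ ha).mp (extAdj_symm G w C' e σ h1)
    obtain ⟨hu2, ha2⟩ := (extAdj_inr_inl_iff G w C' e σ ha).mp (extAdj_symm G w C' e σ h2)
    have : (σ u) j = (σ u) j' := by
      have := ha1.symm.trans ha2
      exact (e _).injective (Subtype.coe_injective this)
    rw [(σ u).injective this]
  · -- both ≠ w
    rw [extL_of_ne G w C' hu] at hx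
    rw [extL_of_ne G w C' hv] at hy hz
    obtain ⟨a, ha, rfl⟩ := hx
    obtain ⟨b, hb, rfl⟩ := hy
    obtain ⟨c, hc, rfl⟩ := hz
    have := C'.matching ⟨u, by simp [hu]⟩ ⟨v, by simp [hv]⟩ huv a ha b hb c hc h1 h2
    rw [this]

/-- The extended cover of `G` built from a cover of `G - w`. -/
def extCover : DPCover G m where
  X := C'.X ⊕ Fin m
  H := { Adj := extAdj G w C' e σ
         symm := ⟨fun a b h => extAdj_symm G w C' e σ h⟩
         loopless := Std.Irrefl.mk <| by
           rintro (x | i) h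
           · exact C'.H.irrefl h
           · exact h rfl }
  L := extL G w C'
  partition := by
    rintro (a | j)
    · obtain ⟨v', hv', huniq⟩ := C'.partition a
      have hne : v'.1 ≠ w := by
        intro h
        exact absurd v'.2 (by simp [h])
      refine ⟨v'.1, ?_, ?_⟩
      · show Sum.inl a ∈ extL G w C' v'.1
        rw [extL_of_ne G w C' hne]
        refine ⟨a, ?_, rfl⟩
        have : (⟨v'.1, by simp [hne]⟩ : ({w}ᶜ : Set V)) = v' := Subtype.ext rfl
        rw [this]
        exact hv'
      · intro v hv
        replace hv : Sum.inl a ∈ extL G w C' v := hv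
        by_cases h : v = w
        · rw [h, extL_self] at hv
          obtain ⟨j, hj⟩ := hv
          cases hj
        · rw [extL_of_ne G w C' h] at hv
          obtain ⟨b, hb, hba⟩ := hv
          cases hba
          exact congrArg Subtype.val (huniq ⟨v, by simp [h]⟩ hb)
    · refine ⟨w, ?_, ?_⟩
      · show Sum.inr j ∈ extL G w C' w
        rw [extL_self]
        exact ⟨j, rfl⟩
      · intro v hv
        replace hv : Sum.inr j ∈ extL G w C' v := hv
        by_cases h : v = w
        · exact h
        · rw [extL_of_ne G w C' h] at hv
          obtain ⟨b, _, hb⟩ := hv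
          cases hb
  fold := by
    intro v
    by_cases h : v = w
    · rw [h, extL_self, Nat.card_range_of_injective Sum.inr_injective]
      simp
    · rw [extL_of_ne G w C' h, Nat.card_image_of_injective Sum.inl_injective]
      exact C'.fold _
  cliques := by
    intro v x hx y hy hne
    by_cases h : v = w
    · rw [h, extL_self] at hx hy
      obtain ⟨i, rfl⟩ := hx
      obtain ⟨j, rfl⟩ := hy
      exact fun hij => hne (by rw [hij])
    · rw [extL_of_ne G w C' h] at hx hy
      obtain ⟨a, ha, rfl⟩ := hx
      obtain ⟨b, hb, rfl⟩ := hy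
      exact C'.cliques _ a ha b hb (fun hab => hne (by rw [hab]))
  cross := by
    intro u v x hx y hy hadj
    by_cases hu : u = w <;> by_cases hv : v = w
    · left; rw [hu, hv]
    · rw [hu, extL_self] at hx
      rw [extL_of_ne G w C' hv] at hy
      obtain ⟨j, rfl⟩ := hx
      obtain ⟨b, hb, rfl⟩ := hy
      obtain ⟨hu1, _⟩ := (extAdj_inr_inl_iff G w C' e σ hb).mp hadj
      rw [hu]
      exact Or.inr hu1
    · rw [hv, extL_self] at hy
      rw [extL_of_ne G w C' hu] at hx
      obtain ⟨a, ha, rfl⟩ := hx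
      obtain ⟨j, rfl⟩ := hy
      obtain ⟨hu1, _⟩ := (extAdj_inr_inl_iff G w C' e σ ha).mp (extAdj_symm G w C' e σ hadj)
      rw [hv]
      exact Or.inr (G.adj_symm hu1)
    · rw [extL_of_ne G w C' hu] at hx
      rw [extL_of_ne G w C' hv] at hy
      obtain ⟨a, ha, rfl⟩ := hx
      obtain ⟨b, hb, rfl⟩ := hy
      rcases C'.cross ⟨u, by simp [hu]⟩ ⟨v, by simp [hv]⟩ a ha b hb hadj with h | h
      · exact Or.inl (congrArg Subtype.val h)
      · exact Or.inr h
  matching := ext_matching G w C' e σ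
  matching' := fun u v huv y hy z hz x hx h1 h2 =>
    ext_matching G w C' e σ v u (G.adj_symm huv) x hx y hy z hz
      (extAdj_symm G w C' e σ h1) (extAdj_symm G w C' e σ h2)

end Ext

section Count
variable {V : Type} [Fintype V] [DecidableEq V] (G : SimpleGraph V) [DecidableRel G.Adj]
  (w : V) {m : ℕ} (C' : DPCover (G.induce ({w}ᶜ : Set V)) m)
  (e : ∀ v : ({w}ᶜ : Set V), Fin m ≃ C'.L v) (σ : V → Equiv.Perm (Fin m))

def condP (p : {g : ({w}ᶜ : Set V) → C'.X // C'.IsColoring g} × Fin m) : Prop :=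
  ∀ u, ∀ hu : G.Adj w u, p.1.1 (nb G w u hu) ≠ (e (nb G w u hu) ((σ u) p.2) : C'.X)

def PhiFun (p : {g : ({w}ᶜ : Set V) → C'.X // C'.IsColoring g} × Fin m) :
    V → C'.X ⊕ Fin m :=
  fun v => if h : v = w then Sum.inr p.2 else Sum.inl (p.1.1 ⟨v, by simp [h]⟩)

theorem Phi_isColoring (p) (hp : condP G w C' e σ p) :
    (extCover G w C' e σ).IsColoring (PhiFun G w C' p) := by
  constructor
  · intro v
    show PhiFun G w C' p v ∈ extL G w C' v
    by_cases h : v = w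
    · rw [h, extL_self]
      simp only [PhiFun, dif_pos rfl]
      exact ⟨p.2, rfl⟩
    · rw [extL_of_ne G w C' h]
      simp only [PhiFun, dif_neg h]
      exact ⟨p.1.1 ⟨v, by simp [h]⟩, p.1.2.1 _, rfl⟩
  · intro u v hne hadj
    replace hadj : extAdj G w C' e σ (PhiFun G w C' p u) (PhiFun G w C' p v) := hadj
    by_cases hu : u = w <;> by_cases hv : v = w
    · exact hne (hu.trans hv.symm)
    · simp only [PhiFun, dif_pos hu, dif_neg hv] at hadj
      obtain ⟨hu1, heq⟩ := (extAdj_inr_inl_iff G w C' e σ (p.1.2.1 ⟨v, by simp [hv]⟩)).mp hadj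
      exact hp v hu1 heq
    · replace hadj := extAdj_symm G w C' e σ hadj
      simp only [PhiFun, dif_pos hv, dif_neg hu] at hadj
      obtain ⟨hu1, heq⟩ := (extAdj_inr_inl_iff G w C' e σ (p.1.2.1 ⟨u, by simp [hu]⟩)).mp hadj
      exact hp u hu1 heq
    · simp only [PhiFun, dif_neg hu, dif_neg hv] at hadj
      exact p.1.2.2 ⟨u, by simp [hu]⟩ ⟨v, by simp [hv]⟩ (fun h => hne (congrArg Subtype.val h))
        hadj

theorem count_ext :
    (extCover G w C' e σ).count
      = Nat.card {p : {g : ({w}ᶜ : Set V) → C'.X // C'.IsColoring g} × Fin m //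
          condP G w C' e σ p} := by
  refine (Nat.card_eq_of_bijective
    (fun p => ⟨PhiFun G w C' p.1, Phi_isColoring G w C' e σ p.1 p.2⟩) ⟨?_, ?_⟩).symm
  · rintro ⟨⟨g, j⟩, hp⟩ ⟨⟨g', j'⟩, hp'⟩ h
    have hfun : PhiFun G w C' (g, j) = PhiFun G w C' (g', j') := congrArg Subtype.val h
    have hj : j = j' := by
      have h2 := congrFun hfun w
      simp only [PhiFun, dif_pos rfl] at h2
      exact Sum.inr_injective h2
    have hg : g = g' := by
      apply Subtype.ext
      funext v'
      have hne : v'.1 ≠ w := fun h => absurd v'.2 (by simp [h])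
      have h2 := congrFun hfun v'.1
      simp only [PhiFun, dif_neg hne] at h2
      exact Sum.inl_injective h2
    apply Subtype.ext
    rw [Prod.mk.injEq]
    exact ⟨hg, hj⟩
  · rintro ⟨f, hf⟩
    have hw : f w ∈ extL G w C' w := hf.1 w
    rw [extL_self] at hw
    obtain ⟨j, hj⟩ := hw
    have hv : ∀ v' : ({w}ᶜ : Set V), ∃ a, a ∈ C'.L v' ∧ f v'.1 = Sum.inl a := by
      intro v'
      have hne : v'.1 ≠ w := fun h => absurd v'.2 (by simp [h])
      have hm : f v'.1 ∈ extL G w C' v'.1 := hf.1 v'.1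
      rw [extL_of_ne G w C' hne] at hm
      obtain ⟨a, ha, h2⟩ := hm
      exact ⟨a, ha, h2.symm⟩
    choose g hg1 hg2 using hv
    have hgcol : C'.IsColoring g := by
      constructor
      · exact hg1
      · intro u' v' hne hadj
        apply hf.2 u'.1 v'.1 (fun h => hne (Subtype.ext h))
        show extAdj G w C' e σ (f u'.1) (f v'.1)
        rw [hg2 u', hg2 v']
        exact hadj
    refine ⟨⟨⟨⟨g, hgcol⟩, j⟩, ?_⟩, ?_⟩
    · intro u hu heq
      have hadj : extAdj G w C' e σ (Sum.inr j) (Sum.inl (g (nb G w u hu))) :=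
        (extAdj_inr_inl_iff G w C' e σ (hg1 (nb G w u hu))).mpr ⟨hu, heq⟩
      apply hf.2 w u (G.ne_of_adj hu)
      show extAdj G w C' e σ (f w) (f u)
      have h2 : f u = Sum.inl (g (nb G w u hu)) := hg2 (nb G w u hu)
      rw [h2, ← hj]
      exact hadj
    · apply Subtype.ext
      show PhiFun G w C' (⟨g, hgcol⟩, j) = f
      funext v
      by_cases h : v = w
      · simp only [PhiFun, dif_pos h]
        rw [h]
        exact hj
      · simp only [PhiFun, dif_neg h]
        exact (hg2 ⟨v, by simp [h]⟩).symm

end Count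

section SumSec
variable {V : Type} [Fintype V] [DecidableEq V] (G : SimpleGraph V) [DecidableRel G.Adj]
  (w : V) {m : ℕ} (C' : DPCover (G.induce ({w}ᶜ : Set V)) m)
  (e : ∀ v : ({w}ᶜ : Set V), Fin m ≃ C'.L v)

include e in
theorem finite_SC : Finite {g : ({w}ᶜ : Set V) → C'.X // C'.IsColoring g} := by
  have : Finite (({w}ᶜ : Set V) → Fin m) := by infer_instance
  refine Finite.of_injective
    (fun (g : {g : ({w}ᶜ : Set V) → C'.X // C'.IsColoring g}) (v' : ({w}ᶜ : Set V)) =>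
      (e v').symm ⟨g.1 v', g.2.1 v'⟩) ?_
  intro g g' h
  apply Subtype.ext
  funext v'
  have h2 := congrFun h v'
  have h3 := (e v').symm.injective h2
  exact congrArg Subtype.val h3

theorem card_sigma_fixed (p : {g : ({w}ᶜ : Set V) → C'.X // C'.IsColoring g} × Fin m) :
    Nat.card {σ : V → Equiv.Perm (Fin m) // condP G w C' e σ p}
      = (Nat.factorial m - Nat.factorial (m - 1)) ^ (G.degree w)
          * (Nat.factorial m) ^ (Fintype.card V - G.degree w) := by
  classical
  have hQ : ∀ v : V, ∀ π : Equiv.Perm (Fin m),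
      (∀ hu : G.Adj w v, p.1.1 (nb G w v hu) ≠ (e (nb G w v hu) (π p.2) : C'.X))
        ↔ (∀ hv : G.Adj w v,
            π p.2 ≠ (e (nb G w v hv)).symm ⟨p.1.1 (nb G w v hv), p.1.2.1 _⟩) := by
    intro v π
    constructor
    · intro h hv hc
      apply h hv
      rw [hc, Equiv.apply_symm_apply]
    · intro h hu heq
      apply h hu
      rw [Equiv.eq_symm_apply]
      exact Subtype.ext heq.symm
  rw [Nat.card_eq_fintype_card]
  have step1 : Fintype.card {σ : V → Equiv.Perm (Fin m) // condP G w C' e σ p}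
      = ∏ v : V, Fintype.card {π : Equiv.Perm (Fin m) //
          ∀ hu : G.Adj w v, p.1.1 (nb G w v hu) ≠ (e (nb G w v hu) (π p.2) : C'.X)} := by
    rw [← Fintype.card_pi]
    exact Fintype.card_congr
      ((Equiv.subtypeEquivRight (fun σ => Iff.rfl)).trans
        (Equiv.subtypePiEquivPi (p := fun v (π : Equiv.Perm (Fin m)) =>
          ∀ hu : G.Adj w v, p.1.1 (nb G w v hu) ≠ (e (nb G w v hu) (π p.2) : C'.X))))
  rw [step1]
  have step2 : ∀ v : V, Fintype.card {π : Equiv.Perm (Fin m) //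
      ∀ hu : G.Adj w v, p.1.1 (nb G w v hu) ≠ (e (nb G w v hu) (π p.2) : C'.X)}
        = if G.Adj w v then Nat.factorial m - Nat.factorial (m - 1)
            else Nat.factorial m := by
    intro v
    by_cases hv : G.Adj w v
    · rw [if_pos hv]
      rw [Fintype.card_congr (Equiv.subtypeEquivRight (fun π => (hQ v π).trans
        (by constructor
            · intro h; exact h hv
            · intro h hu; exact h)))]
      exact card_perm_ne m p.2 _
    · rw [if_neg hv]
      rw [Fintype.card_congr (Equiv.subtypeEquivRight (fun π => (hQ v π).trans
        (iff_true_intro (fun hu => absurd hu hv))))]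
      rw [Fintype.card_congr (Equiv.subtypeUnivEquiv (fun π => trivial))]
      simp [Fintype.card_perm]
  rw [Finset.prod_congr rfl (fun v _ => step2 v)]
  rw [Finset.prod_ite, Finset.prod_const, Finset.prod_const]
  have hdeg : (Finset.univ.filter (fun v => G.Adj w v)).card = G.degree w := by
    rw [← SimpleGraph.neighborFinset_eq_filter]
    rfl
  congr 1
  · rw [hdeg]
  · congr 1
    have := Finset.card_filter_add_card_filter_not
      (s := (Finset.univ : Finset V)) (p := fun v => G.Adj w v)
    rw [Finset.card_univ] at this
    omega

include e in
theorem sum_count :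
    (∑ σ : V → Equiv.Perm (Fin m),
        Nat.card {p : {g : ({w}ᶜ : Set V) → C'.X // C'.IsColoring g} × Fin m //
          condP G w C' e σ p})
      = C'.count * m * ((Nat.factorial m - Nat.factorial (m - 1)) ^ (G.degree w)
          * (Nat.factorial m) ^ (Fintype.card V - G.degree w)) := by
  classical
  haveI : Finite {g : ({w}ᶜ : Set V) → C'.X // C'.IsColoring g} := finite_SC G w C' e
  haveI : Fintype {g : ({w}ᶜ : Set V) → C'.X // C'.IsColoring g} := Fintype.ofFinite _
  have step1 : ∀ σ : V → Equiv.Perm (Fin m),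
      Nat.card {p : {g : ({w}ᶜ : Set V) → C'.X // C'.IsColoring g} × Fin m //
          condP G w C' e σ p}
        = ∑ p : {g : ({w}ᶜ : Set V) → C'.X // C'.IsColoring g} × Fin m,
            if condP G w C' e σ p then 1 else 0 := by
    intro σ
    rw [Nat.card_eq_fintype_card, Fintype.card_subtype, Finset.card_filter]
  rw [Finset.sum_congr rfl (fun σ _ => step1 σ), Finset.sum_comm]
  have step2 : ∀ p : {g : ({w}ᶜ : Set V) → C'.X // C'.IsColoring g} × Fin m,
      (∑ σ : V → Equiv.Perm (Fin m), if condP G w C' e σ p then 1 else 0)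
        = (Nat.factorial m - Nat.factorial (m - 1)) ^ (G.degree w)
            * (Nat.factorial m) ^ (Fintype.card V - G.degree w) := by
    intro p
    rw [← Finset.card_filter, ← Fintype.card_subtype, ← Nat.card_eq_fintype_card]
    exact card_sigma_fixed G w C' e p
  rw [Finset.sum_congr rfl (fun p _ => step2 p), Finset.sum_const, Finset.card_univ,
    Fintype.card_prod, Fintype.card_fin, smul_eq_mul, ← Nat.card_eq_fintype_card]
  show Nat.card {g : ({w}ᶜ : Set V) → C'.X // C'.IsColoring g} * m * _ = _
  rfl

end SumSec

theorem stmt_12 {V : Type} [Fintype V] [DecidableEq V] (G : SimpleGraph V)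
    [DecidableRel G.Adj] (w : V) (d : ℕ) (hd : G.degree w = d) (m : ℕ) :
    (PDP G m : ℚ) ≤
      (m : ℚ) * (1 - 1 / (m : ℚ)) ^ d * (PDP (G.induce ({w}ᶜ : Set V)) m : ℚ) := by
  subst hd
  by_cases hm : m = 0
  · subst hm
    have h0 : PDP G 0 = 0 := by
      have hc : (trivCover G 0).count = 0 := by
        haveI : IsEmpty {f : V → (trivCover G 0).X // (trivCover G 0).IsColoring f} :=
          ⟨fun f => (show V × Fin 0 from f.1 w).2.elim0⟩
        exact Nat.card_of_isEmpty
      have := PDP_le G 0 (trivCover G 0)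
      omega
    rw [h0]
    norm_num
  · have hm1 : 1 ≤ m := Nat.one_le_iff_ne_zero.mpr hm
    obtain ⟨C', hC'⟩ := PDP_exists (G.induce ({w}ᶜ : Set V)) m
    have he : ∀ v' : ({w}ᶜ : Set V), Fin m ≃ C'.L v' := fun v' =>
      ((Nat.equivFinOfCardPos (by rw [C'.fold]; omega)).trans (finCongr (C'.fold v'))).symm
    set n := Fintype.card V with hn
    set dd := G.degree w with hdd
    set M := Nat.factorial m with hM
    set K := Nat.factorial m - Nat.factorial (m - 1) with hK
    have hdn : dd ≤ n := by
      rw [hdd, hn, SimpleGraph.degree]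
      exact Finset.card_le_univ _
    -- choose a minimizing σ
    obtain ⟨σ0, -, hσ0⟩ := Finset.exists_min_image Finset.univ
      (fun σ : V → Equiv.Perm (Fin m) =>
        Nat.card {p : {g : ({w}ᶜ : Set V) → C'.X // C'.IsColoring g} × Fin m //
          condP G w C' he σ p})
      (Finset.univ_nonempty)
    have hsum := Finset.card_nsmul_le_sum Finset.univ
      (fun σ : V → Equiv.Perm (Fin m) =>
        Nat.card {p : {g : ({w}ᶜ : Set V) → C'.X // C'.IsColoring g} × Fin m //
          condP G w C' he σ p})
      (Nat.card {p : {g : ({w}ᶜ : Set V) → C'.X // C'.IsColoring g} × Fin m //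
          condP G w C' he σ0 p})
      (fun σ hσ => hσ0 σ hσ)
    rw [sum_count G w C' he, Finset.card_univ, Fintype.card_fun, Fintype.card_perm,
      Fintype.card_fin, smul_eq_mul, hC'] at hsum
    -- hsum : M ^ n * count σ0 ≤ PDP G' m * m * (K ^ dd * M ^ (n - dd))
    have hPDP : PDP G m ≤ Nat.card
        {p : {g : ({w}ᶜ : Set V) → C'.X // C'.IsColoring g} × Fin m //
          condP G w C' he σ0 p} := by
      have h1 := PDP_le G m (extCover G w C' he σ0)
      rw [count_ext G w C' he σ0] at h1
      exact h1
    have hkey : M ^ n * PDP G m ≤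
        PDP (G.induce ({w}ᶜ : Set V)) m * m * (K ^ dd * M ^ (n - dd)) :=
      le_trans (Nat.mul_le_mul_left _ hPDP) hsum
    -- move to ℚ
    have hm0 : (m : ℚ) ≠ 0 := Nat.cast_ne_zero.mpr hm
    have ha0 : ((Nat.factorial (m - 1) : ℕ) : ℚ) ≠ 0 :=
      Nat.cast_ne_zero.mpr (Nat.factorial_ne_zero _)
    have hMa : ((M : ℕ) : ℚ) = (m : ℚ) * ((Nat.factorial (m - 1) : ℕ) : ℚ) := by
      rw [hM]
      obtain ⟨k, rfl⟩ := Nat.exists_eq_succ_of_ne_zero hm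
      push_cast [Nat.factorial_succ]
      ring
    have hMpos : (0 : ℚ) < ((M : ℕ) : ℚ) ^ n := by
      rw [hM]
      positivity
    have h1m : ((1 : ℚ) - 1 / m) * ((M : ℕ) : ℚ) = ((K : ℕ) : ℚ) := by
      rw [hK, Nat.cast_sub (Nat.factorial_le (by omega)), ← hM, hMa]
      field_simp
    rw [← mul_le_mul_iff_of_pos_right hMpos]
    calc (PDP G m : ℚ) * ((M:ℕ):ℚ) ^ n
        = ((M ^ n * PDP G m : ℕ) : ℚ) := by push_cast; ring
      _ ≤ ((PDP (G.induce ({w}ᶜ : Set V)) m * m * (K ^ dd * M ^ (n - dd)) : ℕ) : ℚ) :=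
          Nat.cast_le.mpr hkey
      _ = (PDP (G.induce ({w}ᶜ : Set V)) m : ℚ) * m * (((K:ℕ):ℚ) ^ dd
            * ((M:ℕ):ℚ) ^ (n - dd)) := by push_cast; ring
      _ = (m : ℚ) * (1 - 1 / (m : ℚ)) ^ dd * (PDP (G.induce ({w}ᶜ : Set V)) m : ℚ)
            * ((M:ℕ):ℚ) ^ n := by
          rw [← h1m, mul_pow]
          rw [show ((M:ℕ):ℚ) ^ n = ((M:ℕ):ℚ) ^ dd * ((M:ℕ):ℚ) ^ (n - dd) by
            rw [← pow_add, Nat.add_sub_cancel' hdn]]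
          ring
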